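/- For all integers k ≥ 1 and all Motzkin paths π_1 and π_2, one has τ_k(U π_1 D π_2) = C(0,k−1) + C(1,k−1) + τ_{k−2}(π_1) + 2·τ_{k−1}(π_1) + τ_k(π_1) + τ_k(π_2), where U π_1 D π_2 denotes the Motzkin path consisting of an up step, followed by π_1 raised one level, followed by a down step, followed by π_2, and where by convention τ_j ≡ 0 for j ≤ 0. -/

import Mathlib

/-- A step of a lattice path: up `(1,1)`, down `(1,-1)`, or level `(1,0)`. -/
inductive Step : Type
  | U : Step
  | D : Step
  | L : Step
deriving DecidableEq

/-- The vertical displacement of a step. -/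
def stepVal : Step → ℤ
  | Step.U => 1
  | Step.D => -1
  | Step.L => 0

/-- A list of steps is a Motzkin path: it ends at height `0` and never goes below
the x-axis. -/
def IsMotzkin (p : List Step) : Prop :=
  ((p.map stepVal).sum = 0) ∧ ∀ i : ℕ, 0 ≤ ((p.take i).map stepVal).sum

/-- The height of the `i`-th step of `p` (the y-coordinate of its left endpoint). -/
def htN (p : List Step) (i : ℕ) : ℕ := (((p.take i).map stepVal).sum).toNat

/-- The statistic `τ_k` on Motzkin paths:
`τ_k(π) = Σ_s C(2·ht(s), k-1) + Σ_t C(2·ht(t)-1, k-1)`, where `s` ranges over up and level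
steps and `t` over down steps; by convention `τ_k = 0` for `k ≤ 0`. -/
def tauM (p : List Step) (k : ℤ) : ℕ :=
  if k ≤ 0 then 0
  else ∑ i : Fin p.length,
    if p.get i = Step.D then Nat.choose (2 * htN p (i : ℕ) - 1) (k.toNat - 1)
    else Nat.choose (2 * htN p (i : ℕ)) (k.toNat - 1)

/-- Binomial coefficient `C(a, b)` with an integer lower index, equal to `0` when `b < 0`. -/
def chooseZ (a : ℕ) (b : ℤ) : ℕ := if b < 0 then 0 else a.choose b.toNat

/-- Per-index term of `tauM`, phrased with `getD` so it is a function of a natural index. -/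
def tm (p : List Step) (m j : ℕ) : ℕ :=
  if p.getD j Step.L = Step.D then Nat.choose (2 * htN p j - 1) m
  else Nat.choose (2 * htN p j) m

lemma tau_eq_sum (p : List Step) (k : ℤ) (hk : ¬ k ≤ 0) :
    tauM p k = ∑ j ∈ Finset.range p.length, tm p (k.toNat - 1) j := by
  rw [tauM, if_neg hk, ← Fin.sum_univ_eq_sum_range (fun j => tm p (k.toNat - 1) j)]
  apply Finset.sum_congr rfl
  intro i _
  simp only [tm, List.getD_eq_getElem p Step.L i.isLt, List.get_eq_getElem]

lemma tau_eq_sum' (p : List Step) (k : ℤ) :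
    tauM p k = ∑ j ∈ Finset.range p.length,
      (if k ≤ 0 then 0 else tm p (k.toNat - 1) j) := by
  by_cases h : k ≤ 0
  · simp [tauM, h]
  · simp only [if_neg h]; exact tau_eq_sum p k h

/-- Partial sums increase by the value of the next step. -/
lemma sum_take_succ (p : List Step) (j : ℕ) (hj : j < p.length) :
    ((p.take (j + 1)).map stepVal).sum
      = ((p.take j).map stepVal).sum + stepVal (p.getD j Step.L) := by
  rw [List.getD_eq_getElem p Step.L hj, List.take_succ, List.getElem?_eq_getElem hj,
    List.map_append, List.sum_append]
  simp only [Option.toList_some, List.map_cons, List.map_nil, List.sum_cons, List.sum_nil,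
    add_zero]

/-- A down step of a Motzkin path has positive height. -/
lemma ht_pos (p : List Step) (hp : IsMotzkin p) (j : ℕ) (hj : j < p.length)
    (hD : p.getD j Step.L = Step.D) : 1 ≤ htN p j := by
  have h1 := hp.2 (j + 1)
  rw [sum_take_succ p j hj, hD] at h1
  have h0 := hp.2 j
  simp only [stepVal] at h1
  unfold htN
  omega

/-- The key Pascal-type identity on binomial coefficients. -/
lemma choose3 (x : ℕ) (k : ℤ) (hk : 1 ≤ k) :
    Nat.choose (x + 2) (k.toNat - 1) =
      (if k - 2 ≤ 0 then 0 else Nat.choose x ((k - 2).toNat - 1)) +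
      2 * (if k - 1 ≤ 0 then 0 else Nat.choose x ((k - 1).toNat - 1)) +
      Nat.choose x (k.toNat - 1) := by
  by_cases h1 : k ≤ 1
  · have hk1 : k = 1 := le_antisymm h1 hk
    subst hk1
    norm_num
  · by_cases h2 : k ≤ 2
    · have hk2 : k = 2 := le_antisymm h2 (by omega)
      subst hk2
      have e0 : (2:ℤ).toNat - 1 = 1 := by decide
      have e1 : ((2:ℤ) - 1).toNat - 1 = 0 := by decide
      rw [if_pos (by norm_num), if_neg (by norm_num), e0, e1, Nat.choose_one_right,
        Nat.choose_one_right, Nat.choose_zero_right]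
      omega
    · -- k ≥ 3
      obtain ⟨j, hj⟩ : ∃ j, k.toNat - 1 = j + 2 := ⟨k.toNat - 3, by omega⟩
      have e1 : (k - 2).toNat - 1 = j := by omega
      have e2 : (k - 1).toNat - 1 = j + 1 := by omega
      rw [hj, e1, e2, if_neg (by omega), if_neg (by omega)]
      show Nat.choose ((x + 1) + 1) ((j + 1) + 1) = _
      rw [Nat.choose_succ_succ (x + 1) (j + 1), Nat.choose_succ_succ x j,
        Nat.choose_succ_succ x (j + 1)]
      ring

/-- Pointwise identity for steps of the lifted inner path. -/
lemma point (p : List Step) (hp : IsMotzkin p) (k : ℤ) (hk : 1 ≤ k) (j : ℕ)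
    (hj : j < p.length) :
    (if p.getD j Step.L = Step.D then Nat.choose (2 * (htN p j + 1) - 1) (k.toNat - 1)
      else Nat.choose (2 * (htN p j + 1)) (k.toNat - 1)) =
    (if k - 2 ≤ 0 then 0 else tm p ((k - 2).toNat - 1) j) +
    2 * (if k - 1 ≤ 0 then 0 else tm p ((k - 1).toNat - 1) j) +
    (if k ≤ 0 then 0 else tm p (k.toNat - 1) j) := by
  rw [if_neg (by omega : ¬ k ≤ 0)]
  unfold tm
  by_cases hD : p.getD j Step.L = Step.D
  · have hh := ht_pos p hp j hj hD
    rw [if_pos hD, if_pos hD, if_pos hD, if_pos hD]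
    have hx : 2 * (htN p j + 1) - 1 = (2 * htN p j - 1) + 2 := by omega
    rw [hx]
    have := choose3 (2 * htN p j - 1) k hk
    split_ifs at this ⊢ <;> omega
  · rw [if_neg hD, if_neg hD, if_neg hD, if_neg hD]
    have hx : 2 * (htN p j + 1) = (2 * htN p j) + 2 := by omega
    rw [hx]
    have := choose3 (2 * htN p j) k hk
    split_ifs at this ⊢ <;> omega

/-- for `k ≥ 1` and Motzkin paths `π₁, π₂`,
`τ_k(U π₁ D π₂) = C(0,k-1) + C(1,k-1) + τ_{k-2}(π₁) + 2·τ_{k-1}(π₁) + τ_k(π₁) + τ_k(π₂)`. -/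
theorem stmt2 (k : ℤ) (hk : 1 ≤ k) (p q : List Step)
    (hp : IsMotzkin p) (hq : IsMotzkin q) :
    tauM (Step.U :: p ++ [Step.D] ++ q) k =
      chooseZ 0 (k - 1) + chooseZ 1 (k - 1) + tauM p (k - 2) + 2 * tauM p (k - 1) +
        tauM p k + tauM q k := by
  have hk0 : ¬ k ≤ 0 := by omega
  have hm : (k - 1).toNat = k.toNat - 1 := by omega
  set n := p.length with hn
  set m := k.toNat - 1 with hmdef
  have hlist : (Step.U :: p ++ [Step.D] ++ q) = Step.U :: (p ++ ([Step.D] ++ q)) := by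
    simp
  rw [hlist]
  set w : List Step := p ++ ([Step.D] ++ q) with hw
  set r : List Step := Step.U :: w with hr
  -- basic take computations for w
  have take_w_le : ∀ j : ℕ, j ≤ n → w.take j = p.take j := by
    intro j hj
    rw [hw, List.take_append, Nat.sub_eq_zero_of_le hj, List.take_zero,
      List.append_nil]
  have take_w_hi : ∀ j : ℕ, w.take (n + 1 + j) = p ++ (Step.D :: q.take j) := by
    intro j
    rw [hw, List.take_append, List.take_of_length_le (by omega)]
    congr 1
    have : n + 1 + j - p.length = j + 1 := by omega
    rw [this]
    exact List.take_succ_cons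
  -- heights in r
  have htr0 : htN r 0 = 0 := by simp [htN]
  have htr_mid : ∀ j : ℕ, j ≤ n → htN r (j + 1) = htN p j + 1 := by
    intro j hj
    have h0 := hp.2 j
    unfold htN
    rw [hr, List.take_succ_cons, take_w_le j hj]
    simp only [List.map_cons, List.sum_cons, stepVal]
    omega
  have htr_top : htN r (n + 1) = 1 := by
    rw [htr_mid n le_rfl]
    unfold htN
    rw [List.take_of_length_le (le_of_eq hn.symm), hp.1]
    rfl
  have htr_q : ∀ j : ℕ, htN r (n + 1 + 1 + j) = htN q j := by
    intro j
    unfold htN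
    have : n + 1 + 1 + j = (n + 1 + j) + 1 := by omega
    rw [this, hr, List.take_succ_cons, take_w_hi j]
    simp only [List.map_cons, List.map_append, List.sum_cons, List.sum_append, stepVal, hp.1]
    ring_nf
  -- getD in r
  have getd_mid : ∀ j : ℕ, j < n → r.getD (j + 1) Step.L = p.getD j Step.L := by
    intro j hj
    rw [hr, List.getD_cons_succ, hw, List.getD_append _ _ _ _ (by omega)]
  have getd_top : r.getD (n + 1) Step.L = Step.D := by
    rw [hr, List.getD_cons_succ, hw, List.getD_append_right _ _ _ _ (by omega)]
    simp [hn]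
  have getd_q : ∀ j : ℕ, r.getD (n + 1 + 1 + j) Step.L = q.getD j Step.L := by
    intro j
    rw [hr]
    have : n + 1 + 1 + j = (n + 1 + j) + 1 := by omega
    rw [this, List.getD_cons_succ, hw, List.getD_append_right _ _ _ _ (by omega)]
    have : n + 1 + j - p.length = 1 + j := by omega
    rw [this]
    have : (1 : ℕ) + j = j + 1 := by omega
    rw [this]
    rw [show ([Step.D] ++ q) = Step.D :: q from rfl, List.getD_cons_succ]
  have hrlen : r.length = (1 + n + 1) + q.length := by
    simp [hr, hw]
    omega
  rw [tau_eq_sum r k hk0, hrlen, ← hmdef]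
  rw [Finset.sum_range_add, Finset.sum_range_succ, Finset.sum_range_add,
    Finset.sum_range_one]
  -- term at index 0
  have t0 : tm r m 0 = chooseZ 0 (k - 1) := by
    have : r.getD 0 Step.L = Step.U := by rw [hr]; rfl
    rw [tm, this, if_neg (by simp), htr0, chooseZ, if_neg (by omega), hm]
  -- term at index 1 + n
  have t1 : tm r m (1 + n) = chooseZ 1 (k - 1) := by
    have e : 1 + n = n + 1 := by omega
    rw [tm, e, getd_top, if_pos rfl, htr_top, chooseZ, if_neg (by omega), hm]
  -- q terms
  have tq : ∑ j ∈ Finset.range q.length, tm r m (1 + n + 1 + j) = tauM q k := by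
    rw [tau_eq_sum q k hk0, ← hmdef]
    apply Finset.sum_congr rfl
    intro j _
    have e : 1 + n + 1 + j = n + 1 + 1 + j := by omega
    rw [tm, tm, e, getd_q j, htr_q j]
  -- p terms
  have tp : ∑ j ∈ Finset.range n, tm r m (1 + j) =
      tauM p (k - 2) + 2 * tauM p (k - 1) + tauM p k := by
    rw [tau_eq_sum' p (k - 2), tau_eq_sum' p (k - 1), tau_eq_sum' p k, ← hn, ← hmdef,
      Finset.mul_sum, ← Finset.sum_add_distrib, ← Finset.sum_add_distrib]
    apply Finset.sum_congr rfl
    intro j hj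
    have hj' : j < n := Finset.mem_range.mp hj
    have e : 1 + j = j + 1 := by omega
    rw [tm, e, getd_mid j hj', htr_mid j (le_of_lt hj'), hmdef]
    exact point p hp k hk j hj'
  rw [t0, t1, tq, tp]
  ring
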